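/- In a finite-horizon MDP with finite state and action spaces, for every history-dependent randomized policy there exists a deterministic Markov policy whose total expected reward is at least as large; in particular, the supremum of total expected reward over all history-dependent randomized policies equals the maximum over deterministic Markov policies, and this maximum equals E_{x₁ ∼ ν₁}[V₁(x₁)] where V is defined by backward induction. -/

import Mathlib

open Classical Finset

noncomputable section

/-- Probability of a trajectory `τ = (states, actions)` of a finite-horizon controlled
Markov chain under a (possibly history-dependent) randomized policy `π`. -/
def trajProb {T : ℕ} {X : Fin (T + 1) → Type*} {U : Fin T → Type*}
    [∀ t, Fintype (X t)] [∀ t, Fintype (U t)]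
    (ν : X 0 → ℝ)
    (P : (t : Fin T) → X t.castSucc → U t → X t.succ → ℝ)
    (π : (t : Fin T) → (∀ s, X s) → (∀ s, U s) → U t → ℝ)
    (τ : (∀ t, X t) × (∀ t, U t)) : ℝ :=
  ν (τ.1 0) * ∏ t : Fin T,
    π t τ.1 τ.2 (τ.2 t) * P t (τ.1 t.castSucc) (τ.2 t) (τ.1 t.succ)

/-- Total expected reward of a policy `π`. -/
def polReward {T : ℕ} {X : Fin (T + 1) → Type*} {U : Fin T → Type*}
    [∀ t, Fintype (X t)] [∀ t, Fintype (U t)]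
    (ν : X 0 → ℝ)
    (P : (t : Fin T) → X t.castSucc → U t → X t.succ → ℝ)
    (r : (t : Fin T) → X t.castSucc → U t → ℝ)
    (π : (t : Fin T) → (∀ s, X s) → (∀ s, U s) → U t → ℝ) : ℝ :=
  ∑ τ : (∀ t, X t) × (∀ t, U t),
    trajProb ν P π τ * ∑ t : Fin T, r t (τ.1 t.castSucc) (τ.2 t)

/-- `π` is a valid randomized policy: at each history it picks a probability
distribution over actions. -/
def ValidPol {T : ℕ} {X : Fin (T + 1) → Type*} {U : Fin T → Type*}
    [∀ t, Fintype (U t)]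
    (π : (t : Fin T) → (∀ s, X s) → (∀ s, U s) → U t → ℝ) : Prop :=
  (∀ t xs us u, 0 ≤ π t xs us u) ∧ (∀ t xs us, ∑ u, π t xs us u = 1)

/-- `π` is history-dependent (adapted): its choice at time `t` depends only on the
states up to time `t` and the actions strictly before time `t`. -/
def AdaptedPol {T : ℕ} {X : Fin (T + 1) → Type*} {U : Fin T → Type*}
    (π : (t : Fin T) → (∀ s, X s) → (∀ s, U s) → U t → ℝ) : Prop :=
  ∀ (t : Fin T) (xs xs' : ∀ s, X s) (us us' : ∀ s, U s),
    (∀ s : Fin (T + 1), s ≤ t.castSucc → xs s = xs' s) →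
    (∀ s : Fin T, s < t → us s = us' s) →
    π t xs us = π t xs' us'

/-- The randomized policy induced by a deterministic Markov policy `d`. -/
def detPol {T : ℕ} {X : Fin (T + 1) → Type*} {U : Fin T → Type*}
    (d : (t : Fin T) → X t.castSucc → U t) :
    (t : Fin T) → (∀ s, X s) → (∀ s, U s) → U t → ℝ :=
  fun t xs _ u => if u = d t (xs t.castSucc) then 1 else 0

namespace MDPwork

universe u v

@[simp] lemma cons_castSucc_succ {T : ℕ} {X : Fin (T + 2) → Type u}
    (x0 : X 0) (xs : ∀ s : Fin (T + 1), X s.succ) (t : Fin T) :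
    Fin.cons (α := X) x0 xs (Fin.castSucc (Fin.succ t)) = xs t.castSucc :=
  Fin.cons_succ x0 xs t.castSucc

section decomp

variable {T : ℕ} {X : Fin (T + 2) → Type u} {U : Fin (T + 1) → Type v}
  [∀ t, Fintype (X t)] [∀ t, Fintype (U t)]
  [∀ t, Nonempty (X t)] [∀ t, Nonempty (U t)]

/-- shifted transition kernels -/
def shiftP (P : (t : Fin (T + 1)) → X t.castSucc → U t → X t.succ → ℝ) :
    (t : Fin T) → ((fun s : Fin (T + 1) => X s.succ) t.castSucc) → U t.succ →
      ((fun s : Fin (T + 1) => X s.succ) t.succ) → ℝ :=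
  fun t => P t.succ

/-- shifted rewards -/
def shiftR (r : (t : Fin (T + 1)) → X t.castSucc → U t → ℝ) :
    (t : Fin T) → ((fun s : Fin (T + 1) => X s.succ) t.castSucc) → U t.succ → ℝ :=
  fun t => r t.succ

/-- shifted policy after observing `(x0, u0)` -/
def shiftPol (π : (t : Fin (T + 1)) → (∀ s, X s) → (∀ s, U s) → U t → ℝ)
    (x0 : X 0) (u0 : U 0) :
    (t : Fin T) → (∀ s : Fin (T + 1), X s.succ) → (∀ s : Fin T, U s.succ) → U t.succ → ℝ :=
  fun t xs us u => π t.succ (Fin.cons x0 xs) (Fin.cons u0 us) u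

/-- first-step action distribution -/
def headPol (π : (t : Fin (T + 1)) → (∀ s, X s) → (∀ s, U s) → U t → ℝ)
    (x0 : X 0) (u0 : U 0) : ℝ :=
  π 0 (Fin.cons x0 fun s => Classical.arbitrary (X s.succ))
    (fun s => Classical.arbitrary (U s)) u0

lemma headPol_eq {π : (t : Fin (T + 1)) → (∀ s, X s) → (∀ s, U s) → U t → ℝ}
    (hA : AdaptedPol π) (x0 : X 0) (xs : ∀ s : Fin (T + 1), X s.succ)
    (us : ∀ s, U s) (u0 : U 0) :
    π 0 (Fin.cons x0 xs) us u0 = headPol π x0 u0 := by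
  unfold headPol
  refine congrFun (hA 0 _ _ _ _ ?_ ?_) u0
  · intro s hs
    have hs0 : s = 0 := by
      apply Fin.ext
      simpa [Fin.le_def] using hs
    subst hs0; simp
  · intro s hs
    exact absurd hs (by simp [Fin.lt_def])

lemma trajProb_cons (ν : X 0 → ℝ) (P : (t : Fin (T + 1)) → X t.castSucc → U t → X t.succ → ℝ)
    (π : (t : Fin (T + 1)) → (∀ s, X s) → (∀ s, U s) → U t → ℝ)
    (x0 : X 0) (xs : ∀ s : Fin (T + 1), X s.succ) (u0 : U 0) (us : ∀ s : Fin T, U s.succ) :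
    trajProb ν P π (Fin.cons x0 xs, Fin.cons u0 us) =
      ν x0 * π 0 (Fin.cons x0 xs) (Fin.cons u0 us) u0 *
        trajProb (P 0 x0 u0) (shiftP P) (shiftPol π x0 u0) (xs, us) := by
  unfold trajProb shiftP shiftPol
  rw [Fin.prod_univ_succ]
  simp only [Fin.cons_zero, Fin.cons_succ, cons_castSucc_succ, Fin.castSucc_zero]
  ring

lemma sum_traj (F : ((∀ t : Fin (T + 2), X t) × (∀ t : Fin (T + 1), U t)) → ℝ) :
    ∑ τ, F τ = ∑ x0 : X 0, ∑ u0 : U 0, ∑ xs : ∀ s : Fin (T + 1), X s.succ,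
      ∑ us : ∀ s : Fin T, U s.succ, F (Fin.cons x0 xs, Fin.cons u0 us) := by
  rw [Fintype.sum_prod_type,
    ← Equiv.sum_comp (Fin.consEquiv X) (fun xsf => ∑ usf, F (xsf, usf)),
    Fintype.sum_prod_type]
  show (∑ x0 : X 0, ∑ xs : ∀ s : Fin (T + 1), X s.succ, ∑ usf, F (Fin.cons x0 xs, usf)) = _
  refine Finset.sum_congr rfl fun x0 _ => ?_
  rw [show (∑ xs : ∀ s : Fin (T + 1), X s.succ, ∑ usf, F (Fin.cons x0 xs, usf))
      = ∑ xs : ∀ s : Fin (T + 1), X s.succ, ∑ u0 : U 0, ∑ us : ∀ s : Fin T, U s.succ,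
        F (Fin.cons x0 xs, Fin.cons u0 us) from
    Finset.sum_congr rfl fun xs _ => by
      rw [← Equiv.sum_comp (Fin.consEquiv U) (fun usf => F (Fin.cons x0 xs, usf)),
        Fintype.sum_prod_type]
      rfl]
  exact Finset.sum_comm


lemma mass_decomp (ν : X 0 → ℝ) (P : (t : Fin (T + 1)) → X t.castSucc → U t → X t.succ → ℝ)
    (π : (t : Fin (T + 1)) → (∀ s, X s) → (∀ s, U s) → U t → ℝ) (hA : AdaptedPol π) :
    ∑ τ : (∀ t, X t) × (∀ t, U t), trajProb ν P π τ =
      ∑ x0 : X 0, ∑ u0 : U 0, (ν x0 * headPol π x0 u0) *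
        ∑ τ' : (∀ s : Fin (T + 1), X s.succ) × (∀ s : Fin T, U s.succ),
          trajProb (P 0 x0 u0) (shiftP P) (shiftPol π x0 u0) τ' := by
  rw [sum_traj]
  refine Finset.sum_congr rfl fun x0 _ => Finset.sum_congr rfl fun u0 _ => ?_
  rw [Fintype.sum_prod_type, Finset.mul_sum]
  refine Finset.sum_congr rfl fun xs _ => ?_
  rw [Finset.mul_sum]
  refine Finset.sum_congr rfl fun us _ => ?_
  rw [trajProb_cons, headPol_eq hA]

lemma reward_decomp (ν : X 0 → ℝ) (P : (t : Fin (T + 1)) → X t.castSucc → U t → X t.succ → ℝ)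
    (r : (t : Fin (T + 1)) → X t.castSucc → U t → ℝ)
    (π : (t : Fin (T + 1)) → (∀ s, X s) → (∀ s, U s) → U t → ℝ) (hA : AdaptedPol π) :
    polReward ν P r π =
      ∑ x0 : X 0, ∑ u0 : U 0, (ν x0 * headPol π x0 u0) *
        (r 0 x0 u0 * (∑ τ' : (∀ s : Fin (T + 1), X s.succ) × (∀ s : Fin T, U s.succ),
            trajProb (P 0 x0 u0) (shiftP P) (shiftPol π x0 u0) τ')
          + polReward (P 0 x0 u0) (shiftP P) (shiftR r) (shiftPol π x0 u0)) := by
  unfold polReward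
  rw [sum_traj]
  refine Finset.sum_congr rfl fun x0 _ => Finset.sum_congr rfl fun u0 _ => ?_
  calc
    (∑ xs : ∀ s : Fin (T + 1), X s.succ, ∑ us : ∀ s : Fin T, U s.succ,
        trajProb ν P π (Fin.cons x0 xs, Fin.cons u0 us) *
          ∑ t : Fin (T + 1), r t (Fin.cons x0 xs t.castSucc) (Fin.cons u0 us t))
      = ∑ xs : ∀ s : Fin (T + 1), X s.succ, ∑ us : ∀ s : Fin T, U s.succ,
          ((ν x0 * headPol π x0 u0) *
              (r 0 x0 u0 * trajProb (P 0 x0 u0) (shiftP P) (shiftPol π x0 u0) (xs, us))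
            + (ν x0 * headPol π x0 u0) *
              (trajProb (P 0 x0 u0) (shiftP P) (shiftPol π x0 u0) (xs, us) *
                ∑ t : Fin T, shiftR r t (xs t.castSucc) (us t))) := by
        refine Finset.sum_congr rfl fun xs _ => Finset.sum_congr rfl fun us _ => ?_
        rw [trajProb_cons, headPol_eq hA, Fin.sum_univ_succ]
        simp only [Fin.cons_zero, Fin.cons_succ, cons_castSucc_succ, Fin.castSucc_zero, shiftR]
        ring
    _ = (ν x0 * headPol π x0 u0) *
          (r 0 x0 u0 * ∑ xs : ∀ s : Fin (T + 1), X s.succ, ∑ us : ∀ s : Fin T, U s.succ,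
              trajProb (P 0 x0 u0) (shiftP P) (shiftPol π x0 u0) (xs, us))
        + (ν x0 * headPol π x0 u0) *
          ∑ xs : ∀ s : Fin (T + 1), X s.succ, ∑ us : ∀ s : Fin T, U s.succ,
            (trajProb (P 0 x0 u0) (shiftP P) (shiftPol π x0 u0) (xs, us) *
              ∑ t : Fin T, shiftR r t (xs t.castSucc) (us t)) := by
        simp only [Finset.sum_add_distrib, ← Finset.mul_sum]
    _ = (ν x0 * headPol π x0 u0) *
        (r 0 x0 u0 * (∑ τ' : (∀ s : Fin (T + 1), X s.succ) × (∀ s : Fin T, U s.succ),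
            trajProb (P 0 x0 u0) (shiftP P) (shiftPol π x0 u0) τ')
          + polReward (P 0 x0 u0) (shiftP P) (shiftR r) (shiftPol π x0 u0)) := by
        unfold polReward
        rw [Fintype.sum_prod_type, Fintype.sum_prod_type]
        ring


lemma shiftPol_valid {π : (t : Fin (T + 1)) → (∀ s, X s) → (∀ s, U s) → U t → ℝ}
    (hV : ValidPol (X := X) π) (x0 : X 0) (u0 : U 0) :
    ValidPol (X := fun s : Fin (T + 1) => X s.succ) (shiftPol π x0 u0) :=
  ⟨fun t xs us u => hV.1 t.succ _ _ u, fun t xs us => hV.2 t.succ _ _⟩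

lemma shiftPol_adapted {π : (t : Fin (T + 1)) → (∀ s, X s) → (∀ s, U s) → U t → ℝ}
    (hA : AdaptedPol π) (x0 : X 0) (u0 : U 0) :
    AdaptedPol (X := fun s : Fin (T + 1) => X s.succ) (shiftPol π x0 u0) := by
  intro t xs xs' us us' hx hu
  unfold shiftPol
  refine hA t.succ _ _ _ _ ?_ ?_
  · intro s hs
    induction s using Fin.cases with
    | zero => simp
    | succ s =>
      simp only [Fin.cons_succ]
      refine hx s ?_
      simp only [Fin.le_def, Fin.coe_castSucc, Fin.val_succ] at hs ⊢
      omega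
  · intro s hs
    induction s using Fin.cases with
    | zero => simp
    | succ s =>
      simp only [Fin.cons_succ]
      refine hu s ?_
      simp only [Fin.lt_def, Fin.val_succ] at hs ⊢
      omega

end decomp

section detpol

variable {T : ℕ} {X : Fin (T + 1) → Type u} {U : Fin T → Type v} [∀ t, Fintype (U t)]

lemma detPol_valid (d : (t : Fin T) → X t.castSucc → U t) : ValidPol (X := X) (detPol d) := by
  constructor
  · intro t xs us u
    unfold detPol
    split <;> norm_num
  · intro t xs us
    simp [detPol, Finset.sum_ite_eq']

lemma detPol_adapted (d : (t : Fin T) → X t.castSucc → U t) : AdaptedPol (X := X) (detPol d) := by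
  intro t xs xs' us us' hx hu
  funext u
  unfold detPol
  rw [hx t.castSucc le_rfl]

end detpol

set_option maxHeartbeats 1000000 in
lemma grand : ∀ (T : ℕ) (X : Fin (T + 1) → Type u) (U : Fin T → Type v)
    [∀ t, Fintype (X t)] [∀ t, Fintype (U t)] [∀ t, Nonempty (X t)] [∀ t, Nonempty (U t)]
    (P : (t : Fin T) → X t.castSucc → U t → X t.succ → ℝ),
    (∀ t x u x', 0 ≤ P t x u x') → (∀ t x u, ∑ x', P t x u x' = 1) →
    ∀ (r : (t : Fin T) → X t.castSucc → U t → ℝ)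
      (V : (t : Fin (T + 1)) → X t → ℝ),
    (∀ x, V (Fin.last T) x = 0) →
    (∀ (t : Fin T) (x : X t.castSucc),
      V t.castSucc x = Finset.univ.sup' Finset.univ_nonempty
        (fun u : U t => r t x u + ∑ x' : X t.succ, V t.succ x' * P t x u x')) →
    ((∀ (ν : X 0 → ℝ), (∀ x, 0 ≤ ν x) → (∑ x, ν x = 1) →
        ∀ π, ValidPol (X := X) π → AdaptedPol π →
          (∑ τ : (∀ t, X t) × (∀ t, U t), trajProb ν P π τ = 1) ∧
          polReward ν P r π ≤ ∑ x, ν x * V 0 x)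
      ∧ ∃ d : (t : Fin T) → X t.castSucc → U t,
          ∀ ν : X 0 → ℝ, polReward ν P r (detPol d) = ∑ x, ν x * V 0 x) := by
  intro T
  induction T with
  | zero =>
    intro X U instX instU instNX instNU P hP0 hP1 r V hVl hVs
    letI : Unique (Fin (0 + 1)) := Fin.instUnique
    have hV0 : ∀ x : X 0, V 0 x = 0 := fun x => hVl x
    have hrew : ∀ (ν : X 0 → ℝ) (π : (t : Fin 0) → (∀ s, X s) → (∀ s, U s) → U t → ℝ),
        polReward ν P r π = 0 := by
      intro ν π
      unfold polReward
      simp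
    have hRHS : ∀ ν : X 0 → ℝ, (∑ x, ν x * V 0 x) = 0 := by
      intro ν
      simp [hV0]
    constructor
    · intro ν hν0 hν1 π hVp hAp
      constructor
      · unfold trajProb
        simp only [Finset.univ_eq_empty, Finset.prod_empty, Finset.prod_of_isEmpty, mul_one]
        rw [Fintype.sum_prod_type]
        calc (∑ xs : ∀ t : Fin 1, X t, ∑ _us : ∀ t : Fin 0, U t, ν (xs 0))
            = ∑ xs : ∀ t : Fin 1, X t, ν (xs 0) := by
              refine Finset.sum_congr rfl fun xs _ => ?_
              simp
          _ = ∑ x : X 0, ν x := by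
              refine Fintype.sum_equiv (Equiv.piUnique X) _ _ fun xs => ?_
              have h : (default : Fin 1) = 0 := Subsingleton.elim _ _
              simp [Equiv.piUnique, h]
          _ = 1 := hν1
      · rw [hrew, hRHS]
    · refine ⟨fun t => t.elim0, fun ν => ?_⟩
      rw [hrew, hRHS]
  | succ T ih =>
    intro X U instX instU instNX instNU P hP0 hP1 r V hVl hVs
    obtain ⟨IHA, d', hd'⟩ := ih (fun s : Fin (T + 1) => X s.succ) (fun s : Fin T => U s.succ)
      (shiftP P) (fun t x u x' => hP0 t.succ x u x') (fun t x u => hP1 t.succ x u)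
      (shiftR r) (fun t => V t.succ) (fun x => hVl x) (fun t x => hVs t.succ x)
    have partA : ∀ (ν : X 0 → ℝ), (∀ x, 0 ≤ ν x) → (∑ x, ν x = 1) →
        ∀ π, ValidPol (X := X) π → AdaptedPol π →
          (∑ τ : (∀ t, X t) × (∀ t, U t), trajProb ν P π τ = 1) ∧
          polReward ν P r π ≤ ∑ x, ν x * V 0 x := by
      intro ν hν0 hν1 π hVp hAp
      have hh0 : ∀ (x0 : X 0) (u0 : U 0), 0 ≤ headPol π x0 u0 := fun x0 u0 => hVp.1 0 _ _ u0
      have hh1 : ∀ x0 : X 0, ∑ u0, headPol π x0 u0 = 1 := fun x0 => hVp.2 0 _ _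
      have hmass : ∀ (x0 : X 0) (u0 : U 0),
          (∑ τ' : (∀ s : Fin (T + 1), X s.succ) × (∀ s : Fin T, U s.succ),
            trajProb (P 0 x0 u0) (shiftP P) (shiftPol π x0 u0) τ') = 1 :=
        fun x0 u0 => (IHA (P 0 x0 u0) (hP0 0 x0 u0) (hP1 0 x0 u0) _
          (shiftPol_valid hVp x0 u0) (shiftPol_adapted hAp x0 u0)).1
      have hbound : ∀ (x0 : X 0) (u0 : U 0),
          polReward (P 0 x0 u0) (shiftP P) (shiftR r) (shiftPol π x0 u0)
            ≤ ∑ x' : X (Fin.succ (0 : Fin (T + 1))),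
                P 0 x0 u0 x' * V (Fin.succ (0 : Fin (T + 1))) x' :=
        fun x0 u0 => (IHA (P 0 x0 u0) (hP0 0 x0 u0) (hP1 0 x0 u0) _
          (shiftPol_valid hVp x0 u0) (shiftPol_adapted hAp x0 u0)).2
      constructor
      · rw [mass_decomp ν P π hAp]
        simp only [hmass, mul_one, ← Finset.mul_sum, hh1, hν1]
      · rw [reward_decomp ν P r π hAp]
        have key : ∀ (x0 : X 0) (u0 : U 0),
            r 0 x0 u0 * (∑ τ' : (∀ s : Fin (T + 1), X s.succ) × (∀ s : Fin T, U s.succ),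
              trajProb (P 0 x0 u0) (shiftP P) (shiftPol π x0 u0) τ')
            + polReward (P 0 x0 u0) (shiftP P) (shiftR r) (shiftPol π x0 u0) ≤ V 0 x0 := by
          intro x0 u0
          rw [hmass x0 u0, mul_one]
          have h3 : V 0 x0 = Finset.univ.sup' Finset.univ_nonempty (fun u : U 0 =>
              r 0 x0 u + ∑ x' : X (Fin.succ (0 : Fin (T + 1))),
                V (Fin.succ (0 : Fin (T + 1))) x' * P 0 x0 u x') := hVs 0 x0
          rw [h3]
          have h5 : (∑ x' : X (Fin.succ (0 : Fin (T + 1))),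
                P 0 x0 u0 x' * V (Fin.succ (0 : Fin (T + 1))) x')
              = ∑ x' : X (Fin.succ (0 : Fin (T + 1))),
                V (Fin.succ (0 : Fin (T + 1))) x' * P 0 x0 u0 x' :=
            Finset.sum_congr rfl fun x' _ => mul_comm _ _
          have h6 : r 0 x0 u0 + polReward (P 0 x0 u0) (shiftP P) (shiftR r) (shiftPol π x0 u0)
              ≤ r 0 x0 u0 + ∑ x' : X (Fin.succ (0 : Fin (T + 1))),
                V (Fin.succ (0 : Fin (T + 1))) x' * P 0 x0 u0 x' := by
            have h4 := hbound x0 u0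
            rw [← h5]
            linarith
          exact h6.trans (Finset.le_sup' (fun u : U 0 => r 0 x0 u +
            ∑ x' : X (Fin.succ (0 : Fin (T + 1))),
              V (Fin.succ (0 : Fin (T + 1))) x' * P 0 x0 u x') (Finset.mem_univ u0))
        calc (∑ x0 : X 0, ∑ u0 : U 0, (ν x0 * headPol π x0 u0) *
              (r 0 x0 u0 * (∑ τ' : (∀ s : Fin (T + 1), X s.succ) × (∀ s : Fin T, U s.succ),
                trajProb (P 0 x0 u0) (shiftP P) (shiftPol π x0 u0) τ')
              + polReward (P 0 x0 u0) (shiftP P) (shiftR r) (shiftPol π x0 u0)))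
            ≤ ∑ x0 : X 0, ∑ u0 : U 0, (ν x0 * headPol π x0 u0) * V 0 x0 :=
              Finset.sum_le_sum fun x0 _ => Finset.sum_le_sum fun u0 _ =>
                mul_le_mul_of_nonneg_left (key x0 u0) (mul_nonneg (hν0 x0) (hh0 x0 u0))
          _ = ∑ x, ν x * V 0 x := by
              refine Finset.sum_congr rfl fun x0 _ => ?_
              rw [← Finset.sum_mul, ← Finset.mul_sum, hh1 x0, mul_one]
    refine ⟨partA, ?_⟩
    have hg : ∀ x0 : X (Fin.castSucc (0 : Fin (T + 1))), ∃ u : U 0,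
        V (Fin.castSucc (0 : Fin (T + 1))) x0 = r 0 x0 u +
          ∑ x' : X (Fin.succ (0 : Fin (T + 1))), V (Fin.succ (0 : Fin (T + 1))) x' * P 0 x0 u x' := by
      intro x0
      rw [hVs 0 x0]
      obtain ⟨u, -, h⟩ := Finset.exists_mem_eq_sup' Finset.univ_nonempty
        (fun u : U 0 => r 0 x0 u +
          ∑ x' : X (Fin.succ (0 : Fin (T + 1))), V (Fin.succ (0 : Fin (T + 1))) x' * P 0 x0 u x')
      exact ⟨u, h⟩
    choose g0 hg0 using hg
    refine ⟨fun t => Fin.cases (motive := fun t => X t.castSucc → U t) g0 d' t, fun ν => ?_⟩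
    set d : (t : Fin (T + 1)) → X t.castSucc → U t :=
      fun t => Fin.cases (motive := fun t => X t.castSucc → U t) g0 d' t with hd
    rw [reward_decomp ν P r (detPol d) (detPol_adapted d)]
    have hhead : ∀ (x0 : X 0) (u0 : U 0),
        headPol (detPol d) x0 u0 = if u0 = g0 x0 then 1 else 0 := by
      intro x0 u0
      unfold headPol detPol
      simp only [Fin.castSucc_zero, Fin.cons_zero, hd, Fin.cases_zero]
    have hshift : ∀ (x0 : X 0) (u0 : U 0),
        shiftPol (detPol d) x0 u0 = detPol (X := fun s : Fin (T + 1) => X s.succ) d' := by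
      intro x0 u0
      funext t xs us u
      unfold shiftPol detPol
      simp only [cons_castSucc_succ, hd, Fin.cases_succ]
    have hmassd : ∀ (x0 : X 0) (u0 : U 0),
        (∑ τ' : (∀ s : Fin (T + 1), X s.succ) × (∀ s : Fin T, U s.succ),
          trajProb (P 0 x0 u0) (shiftP P) (shiftPol (detPol d) x0 u0) τ') = 1 := by
      intro x0 u0
      rw [hshift x0 u0]
      exact (IHA (P 0 x0 u0) (hP0 0 x0 u0) (hP1 0 x0 u0) _
        (detPol_valid d') (detPol_adapted (X := fun s : Fin (T + 1) => X s.succ) d')).1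
    have hrewd : ∀ (x0 : X 0) (u0 : U 0),
        polReward (P 0 x0 u0) (shiftP P) (shiftR r) (shiftPol (detPol d) x0 u0)
          = ∑ x' : X (Fin.succ (0 : Fin (T + 1))),
              P 0 x0 u0 x' * V (Fin.succ (0 : Fin (T + 1))) x' := by
      intro x0 u0
      rw [hshift x0 u0]
      exact hd' (P 0 x0 u0)
    refine Finset.sum_congr rfl fun x0 _ => ?_
    simp only [hhead, hmassd, hrewd, mul_one, mul_ite, mul_zero, ite_mul, zero_mul,
      Finset.sum_ite_eq', Finset.mem_univ, if_true]
    have hc : (∑ x' : X (Fin.succ (0 : Fin (T + 1))),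
          P 0 x0 (g0 x0) x' * V (Fin.succ (0 : Fin (T + 1))) x')
        = ∑ x' : X (Fin.succ (0 : Fin (T + 1))),
          V (Fin.succ (0 : Fin (T + 1))) x' * P 0 x0 (g0 x0) x' :=
      Finset.sum_congr rfl fun x' _ => mul_comm _ _
    rw [hc, ← hg0 x0]
    rfl


/-- Value function defined by backward induction. -/
def bellV {T : ℕ} (X : Fin (T + 1) → Type u) (U : Fin T → Type v)
    [∀ t, Fintype (X t)] [∀ t, Fintype (U t)] [∀ t, Nonempty (U t)]
    (P : (t : Fin T) → X t.castSucc → U t → X t.succ → ℝ)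
    (r : (t : Fin T) → X t.castSucc → U t → ℝ) : (t : Fin (T + 1)) → X t → ℝ :=
  fun t =>
    if h : (t : ℕ) = T then fun _ => 0
    else fun x =>
      let t' : Fin T := ⟨t, Nat.lt_of_le_of_ne (Nat.lt_succ_iff.mp t.isLt) h⟩
      Finset.univ.sup' Finset.univ_nonempty
        (fun u : U t' => r t' x u + ∑ x' : X t'.succ, bellV X U P r t'.succ x' * P t' x u x')
  termination_by t => T - (t : ℕ)
  decreasing_by
    simp only [Fin.val_succ]
    omega

lemma bellV_last {T : ℕ} (X : Fin (T + 1) → Type u) (U : Fin T → Type v)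
    [∀ t, Fintype (X t)] [∀ t, Fintype (U t)] [∀ t, Nonempty (U t)]
    (P : (t : Fin T) → X t.castSucc → U t → X t.succ → ℝ)
    (r : (t : Fin T) → X t.castSucc → U t → ℝ) (x : X (Fin.last T)) :
    bellV X U P r (Fin.last T) x = 0 := by
  rw [bellV]
  simp

lemma bellV_step {T : ℕ} (X : Fin (T + 1) → Type u) (U : Fin T → Type v)
    [∀ t, Fintype (X t)] [∀ t, Fintype (U t)] [∀ t, Nonempty (U t)]
    (P : (t : Fin T) → X t.castSucc → U t → X t.succ → ℝ)
    (r : (t : Fin T) → X t.castSucc → U t → ℝ) (t : Fin T) (x : X t.castSucc) :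
    bellV X U P r t.castSucc x = Finset.univ.sup' Finset.univ_nonempty
      (fun u : U t => r t x u +
        ∑ x' : X t.succ, bellV X U P r t.succ x' * P t x u x') := by
  conv_lhs => rw [bellV]
  rw [dif_neg (by simp only [Fin.coe_castSucc]; omega)]
  rfl

end MDPwork

theorem stmt5 {T : ℕ} {X : Fin (T + 1) → Type*} {U : Fin T → Type*}
    [∀ t, Fintype (X t)] [∀ t, Fintype (U t)]
    [∀ t, Nonempty (X t)] [∀ t, Nonempty (U t)]
    (ν : X 0 → ℝ) (hν0 : ∀ x, 0 ≤ ν x) (hν1 : ∑ x, ν x = 1)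
    (P : (t : Fin T) → X t.castSucc → U t → X t.succ → ℝ)
    (hP0 : ∀ t x u x', 0 ≤ P t x u x')
    (hP1 : ∀ t x u, ∑ x', P t x u x' = 1)
    (r : (t : Fin T) → X t.castSucc → U t → ℝ) :
    -- (a) every history-dependent randomized policy is dominated by a deterministic
    -- Markov policy
    (∀ π, ValidPol (X := X) π → AdaptedPol π →
      ∃ d : (t : Fin T) → X t.castSucc → U t,
        polReward ν P r π ≤ polReward ν P r (detPol d)) ∧
    -- (b) for the value function `V` defined by backward induction, the maximum over
    -- deterministic Markov policies is attained, equals `E_{x₁ ∼ ν}[V₁(x₁)]`, and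
    -- equals the supremum over all history-dependent randomized policies
    (∀ V : (t : Fin (T + 1)) → X t → ℝ,
      (∀ x, V (Fin.last T) x = 0) →
      (∀ (t : Fin T) (x : X t.castSucc),
        V t.castSucc x = Finset.univ.sup' Finset.univ_nonempty
          (fun u : U t => r t x u + ∑ x' : X t.succ, V t.succ x' * P t x u x')) →
      (∃ d : (t : Fin T) → X t.castSucc → U t,
          polReward ν P r (detPol d) = ∑ x, ν x * V 0 x) ∧
      (∀ d : (t : Fin T) → X t.castSucc → U t,
          polReward ν P r (detPol d) ≤ ∑ x, ν x * V 0 x) ∧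
      IsLUB {j : ℝ | ∃ π, ValidPol (X := X) π ∧ AdaptedPol π ∧ j = polReward ν P r π}
        (∑ x, ν x * V 0 x)) := by
  constructor
  · intro π hv ha
    obtain ⟨pA, d, hd⟩ := MDPwork.grand T X U P hP0 hP1 r (MDPwork.bellV X U P r)
      (MDPwork.bellV_last X U P r) (MDPwork.bellV_step X U P r)
    refine ⟨d, ?_⟩
    calc polReward ν P r π ≤ ∑ x, ν x * MDPwork.bellV X U P r 0 x :=
          (pA ν hν0 hν1 π hv ha).2
      _ = polReward ν P r (detPol d) := (hd ν).symm
  · intro V hVl hVs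
    obtain ⟨pA, d, hd⟩ := MDPwork.grand T X U P hP0 hP1 r V hVl hVs
    refine ⟨⟨d, hd ν⟩, fun d0 =>
      (pA ν hν0 hν1 (detPol d0) (MDPwork.detPol_valid d0) (MDPwork.detPol_adapted d0)).2, ?_, ?_⟩
    · rintro j ⟨π, hv, ha, rfl⟩
      exact (pA ν hν0 hν1 π hv ha).2
    · intro b hb
      exact hb ⟨detPol d, MDPwork.detPol_valid d, MDPwork.detPol_adapted d, (hd ν).symm⟩


end
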